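/- Let k be a commutative ring, ε ∈ {0, 1/2}, d = n - 2ε, and assume d > r + 1. If λ is a partition of d with strictly fewer than d - r parts, then y_λ = Σ_{w ∈ W_λ} sgn(w) w lies in the kernel of Φ_{n,r+ε}; that is: for ε = 0, y_λ ∈ k[W_n] annihilates V^{⊗r} under the diagonal action of W_n, and for ε = 1/2, y_λ ∈ k[W_{n-1}] annihilates V^{⊗r} under the restricted action of W_{n-1} = {w ∈ W_n : w(n) = n}. Consequently the two-sided ideal of k[W_d] generated by all such y_λ is contained in the kernel of Φ_{n,r+ε}. -/

import Mathlib

noncomputable section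

open Equiv

/-- The linear action of a group `G` on the free `k`-module `X → k` of functions,
induced from a `G`-action on `X` by `(g • f) x = f (g⁻¹ • x)`. -/
def actEnd (k : Type) [CommRing k] (G : Type) [Group G] (X : Type) [MulAction G X] :
    G →* Module.End k (X → k) where
  toFun g := LinearMap.funLeft k k fun x => g⁻¹ • x
  map_one' := by
    ext f x
    simp
  map_mul' g₁ g₂ := by
    ext f x
    simp [mul_smul]

/-- The diagonal (value-permutation) action of the symmetric group `W_n` on
`V^{⊗r}` (`V = k^n`), modelled as the free `k`-module on multi-indices `Fin r → Fin n`;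
on basis vectors, `w ⬝ (v_{i_1} ⊗ ⋯ ⊗ v_{i_r}) = v_{w i_1} ⊗ ⋯ ⊗ v_{w i_r}`. -/
def permEnd (k : Type) [CommRing k] (n r : ℕ) :
    Equiv.Perm (Fin n) →* Module.End k ((Fin r → Fin n) → k) :=
  actEnd k (Equiv.Perm (Fin n)) (Fin r → Fin n)

/-- `Φ_{n,r} : k[W_n] → End_k(V^{⊗r})`. -/
def PhiAlg (k : Type) [CommRing k] (n r : ℕ) :
    MonoidAlgebra k (Equiv.Perm (Fin n)) →ₐ[k] Module.End k ((Fin r → Fin n) → k) :=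
  MonoidAlgebra.lift k (Module.End k ((Fin r → Fin n) → k)) (Equiv.Perm (Fin n)) (permEnd k n r)

/-- The restriction of `Φ_{n,r}` to the group algebra of a subgroup `G ≤ W_n`. -/
def PhiSub (k : Type) [CommRing k] (n r : ℕ) (G : Subgroup (Equiv.Perm (Fin n))) :
    MonoidAlgebra k ↥G →ₐ[k] Module.End k ((Fin r → Fin n) → k) :=
  MonoidAlgebra.lift k (Module.End k ((Fin r → Fin n) → k)) ↥G ((permEnd k n r).comp G.subtype)

/-- `W_{n-1} = {w ∈ W_n : w(n) = n}`, the stabilizer of the last basis vector. -/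
def stabLast (n : ℕ) (hn : 0 < n) : Subgroup (Equiv.Perm (Fin n)) :=
  MulAction.stabilizer (Equiv.Perm (Fin n)) (⟨n - 1, Nat.sub_lt hn Nat.one_pos⟩ : Fin n)

/-- `V(Λ)`: the span of the basis tensors whose multi-index has value-type `Λ`
(the value-type of a multi-index `i` is the set-partition `Setoid.ker i` by fibers). -/
def Vpart (k : Type) [CommRing k] (n r : ℕ) (Λ : Setoid (Fin r)) :
    Submodule k ((Fin r → Fin n) → k) :=
  Submodule.span k {f | ∃ i : Fin r → Fin n, Setoid.ker i = Λ ∧ f = Pi.single i 1}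

/-- `V'(Λ')`: the span of the basis tensors `v_{i_1} ⊗ ⋯ ⊗ v_{i_r} ⊗ v_n`
whose multi-index `(i_1, …, i_r, n)` has value-type `Λ'`. -/
def Vpart' (k : Type) [CommRing k] (n r : ℕ) (hn : 0 < n) (Λ' : Setoid (Fin (r + 1))) :
    Submodule k ((Fin (r + 1) → Fin n) → k) :=
  Submodule.span k {f | ∃ i : Fin (r + 1) → Fin n, Setoid.ker i = Λ' ∧
    i (Fin.last r) = (⟨n - 1, Nat.sub_lt hn Nat.one_pos⟩ : Fin n) ∧ f = Pi.single i 1}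

/-- The submodule `V^{⊗r} ⊗ v_n ⊆ V^{⊗(r+1)}`. -/
def lastSub (k : Type) [CommRing k] (n r : ℕ) (hn : 0 < n) :
    Submodule k ((Fin (r + 1) → Fin n) → k) :=
  Submodule.span k {f | ∃ i : Fin (r + 1) → Fin n,
    i (Fin.last r) = (⟨n - 1, Nat.sub_lt hn Nat.one_pos⟩ : Fin n) ∧ f = Pi.single i 1}

/-- The multi-index of the tensor `v_{n-l+1} ⊗ ⋯ ⊗ v_n`. -/
def baseIdx (n l : ℕ) (h : l ≤ n) : Fin l → Fin n :=
  fun α => ⟨n - l + α.1, by have := α.isLt; omega⟩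

/-- `H_n(l)`: the `k[W_n]`-submodule of `V^{⊗l}` generated by `v_{n-l+1} ⊗ ⋯ ⊗ v_n`. -/
def Hmod (k : Type) [CommRing k] (n l : ℕ) (h : l ≤ n) :
    Submodule k ((Fin l → Fin n) → k) :=
  Submodule.span k
    (Set.range fun w : Equiv.Perm (Fin n) => permEnd k n l w (Pi.single (baseIdx n l h) 1))

/-- The multi-index of the tensor `v_{n-m} ⊗ ⋯ ⊗ v_{n-1}` (inside `U = ⟨v_1, …, v_{n-1}⟩`). -/
def baseIdx' (n m : ℕ) (h : m < n) : Fin m → Fin n :=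
  fun α => ⟨n - 1 - m + α.1, by have := α.isLt; omega⟩

/-- `H_{n-1}(m)`: the `k[W_{n-1}]`-submodule of `U^{⊗m}` generated by
`v_{n-m} ⊗ ⋯ ⊗ v_{n-1}`, where `U = ⟨v_1, …, v_{n-1}⟩`. -/
def Hprime (k : Type) [CommRing k] (n m : ℕ) (h : m < n) :
    Submodule k ((Fin m → Fin n) → k) :=
  Submodule.span k
    (Set.range fun w : ↥(stabLast n (by omega)) =>
      permEnd k n m ↑w (Pi.single (baseIdx' n m h) 1))

/-- The Young subgroup `W_{(n-l,1^l)}` of permutations fixing each of the last `l` points. -/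
def fixTop (n l : ℕ) : Subgroup (Equiv.Perm (Fin n)) where
  carrier := {w | ∀ j : Fin n, n - l ≤ (j : ℕ) → w j = j}
  one_mem' := by intro j _; rfl
  mul_mem' := by
    intro a b ha hb j hj
    simp only [Set.mem_setOf_eq] at ha hb
    rw [Equiv.Perm.mul_apply, hb j hj, ha j hj]
  inv_mem' := by
    intro a ha j hj
    simp only [Set.mem_setOf_eq] at ha
    conv_lhs => rw [← ha j hj]
    exact (show a⁻¹ (a j) = j from Equiv.symm_apply_apply a j)

/-- The index of the consecutive block (with block sizes `lam`) containing position `x`. -/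
def blockIdx (lam : List ℕ) (x : ℕ) : ℕ :=
  ((List.range lam.length).filter fun t => (lam.take (t + 1)).sum ≤ x).length

/-- The Young subgroup `W_λ ≤ W_d`: permutations preserving each consecutive block
of sizes `λ_1, λ_2, …`. -/
def youngSubgroup (d : ℕ) (lam : List ℕ) : Subgroup (Equiv.Perm (Fin d)) where
  carrier := {w | ∀ j : Fin d, blockIdx lam ((w j : Fin d) : ℕ) = blockIdx lam (j : ℕ)}
  one_mem' := by intro j; rfl
  mul_mem' := by
    intro a b ha hb j
    simp only [Set.mem_setOf_eq] at ha hb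
    rw [Equiv.Perm.mul_apply, ha (b j), hb j]
  inv_mem' := by
    intro a ha j
    simp only [Set.mem_setOf_eq] at ha
    conv_rhs => rw [← show a (a⁻¹ j) = j from Equiv.apply_symm_apply a j]
    rw [ha (a⁻¹ j)]

/-- `x_λ = Σ_{w ∈ W_λ} w ∈ k[W_d]`. -/
def xElt (k : Type) [CommRing k] (d : ℕ) (lam : List ℕ) :
    MonoidAlgebra k (Equiv.Perm (Fin d)) :=
  letI := Classical.decPred (· ∈ youngSubgroup d lam)
  ∑ w ∈ Finset.univ.filter (· ∈ youngSubgroup d lam), MonoidAlgebra.single w (1 : k)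

/-- `y_λ = Σ_{w ∈ W_λ} sgn(w) w ∈ k[W_d]`. -/
def yElt (k : Type) [CommRing k] (d : ℕ) (lam : List ℕ) :
    MonoidAlgebra k (Equiv.Perm (Fin d)) :=
  letI := Classical.decPred (· ∈ youngSubgroup d lam)
  ∑ w ∈ Finset.univ.filter (· ∈ youngSubgroup d lam),
    MonoidAlgebra.single w ((Equiv.Perm.sign w : ℤ) : k)

/-- `y_λ = Σ_{w ∈ W_λ ∩ G} sgn(w) w`, as an element of the group algebra of a
subgroup `G ≤ W_d` (for `G = W_{n-1}` and `λ ⊢ n-1` this is the usual `y_λ ∈ k[W_{n-1}]`). -/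
def yEltSub (k : Type) [CommRing k] {d : ℕ} (G : Subgroup (Equiv.Perm (Fin d)))
    (lam : List ℕ) : MonoidAlgebra k ↥G :=
  letI : Fintype ↥G := Fintype.ofFinite ↥G
  letI := Classical.decPred fun w : ↥G => (w : Equiv.Perm (Fin d)) ∈ youngSubgroup d lam
  ∑ w ∈ Finset.univ.filter (fun w : ↥G => (w : Equiv.Perm (Fin d)) ∈ youngSubgroup d lam),
    MonoidAlgebra.single w ((Equiv.Perm.sign (w : Equiv.Perm (Fin d)) : ℤ) : k)

/-- The dominance order on partitions (as lists of parts): `lam ⊵ mu`. -/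
def Dominates (lam mu : List ℕ) : Prop :=
  ∀ t : ℕ, (mu.take t).sum ≤ (lam.take t).sum

/-- The conjugate (transpose) partition: `μᵀ_i = #{j : μ_j ≥ i}`. -/
def conjList (mu : List ℕ) : List ℕ :=
  (List.range mu.headI).map fun i => (mu.filter fun p => i < p).length

/-- `lam` is a partition of `d`: positive parts, in weakly decreasing order, summing to `d`. -/
def IsPartitionList (d : ℕ) (lam : List ℕ) : Prop :=
  (∀ p ∈ lam, 0 < p) ∧ lam.sum = d ∧ lam.Pairwise (· ≥ ·)

/-- The hook partition `α(d,r) = (d-r, 1^r)`. -/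
def hookPartition (d r : ℕ) : List ℕ := (d - r) :: List.replicate r 1

/-- The representation of `k[W_d]` on the permutation module `M^λ`, the free `k`-module
on the left cosets `W_d / W_λ` with `W_d` acting by left translation. -/
def PhiQuot (k : Type) [CommRing k] (d : ℕ) (lam : List ℕ) :
    MonoidAlgebra k (Equiv.Perm (Fin d)) →ₐ[k]
      Module.End k ((Equiv.Perm (Fin d) ⧸ youngSubgroup d lam) → k) :=
  MonoidAlgebra.lift k _ _
    (actEnd k (Equiv.Perm (Fin d)) (Equiv.Perm (Fin d) ⧸ youngSubgroup d lam))

/-- The representation of `k[G]` (for `G ≤ W_d`) on the permutation module on the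
left cosets `G / (G ∩ W_λ)`. -/
def PhiQuotSub (k : Type) [CommRing k] {d : ℕ} (G : Subgroup (Equiv.Perm (Fin d)))
    (lam : List ℕ) :
    MonoidAlgebra k ↥G →ₐ[k]
      Module.End k ((↥G ⧸ Subgroup.comap G.subtype (youngSubgroup d lam)) → k) :=
  MonoidAlgebra.lift k _ _
    (actEnd k ↥G (↥G ⧸ Subgroup.comap G.subtype (youngSubgroup d lam)))

/-- The Stirling number of the second kind `S(r,l)`: the number of set-partitions
of an `r`-element set into exactly `l` nonempty blocks. -/
def stirling (r l : ℕ) : ℕ :=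
  Nat.card {Λ : Setoid (Fin r) // Nat.card (Quotient Λ) = l}


/-! ### Auxiliary lemmas -/

lemma permEnd_apply_aux (k : Type) [CommRing k] (n r : ℕ) (w : Equiv.Perm (Fin n))
    (f : (Fin r → Fin n) → k) (x : Fin r → Fin n) :
    permEnd k n r w f x = f (fun α => w⁻¹ (x α)) := rfl

lemma core_cancel (k : Type) [CommRing k] {G : Type} [Group G] (n r : ℕ)
    (φ : G →* Equiv.Perm (Fin n)) (s : Finset G) (c : G → k)
    (H : ∀ x : Fin r → Fin n, ∃ τ : G, τ * τ = 1 ∧ τ ≠ 1 ∧ (∀ α, φ τ (x α) = x α) ∧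
      (∀ w ∈ s, τ * w ∈ s) ∧ (∀ w ∈ s, c (τ * w) = - c w)) :
    (∑ w ∈ s, c w • (permEnd k n r (φ w))) = 0 := by
  apply LinearMap.ext; intro f
  funext x
  have hval : (∑ w ∈ s, c w • (permEnd k n r (φ w))) f x
      = ∑ w ∈ s, c w * f (fun α => (φ w)⁻¹ (x α)) := by
    rw [LinearMap.sum_apply, Finset.sum_apply]
    exact Finset.sum_congr rfl fun w _ => rfl
  obtain ⟨τ, hτ2, hτ1, hfix, hmem, hc⟩ := H x
  have key : ∑ w ∈ s, c w * f (fun α => (φ w)⁻¹ (x α)) = 0 := by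
    apply Finset.sum_involution (fun w _ => τ * w)
    · intro w hw
      have hY : (fun α => (φ (τ * w))⁻¹ (x α)) = (fun α => (φ w)⁻¹ (x α)) := by
        funext α
        have h1 : (φ τ)⁻¹ (x α) = x α := by
          conv_lhs => rw [← hfix α]
          exact Equiv.symm_apply_apply _ _
        rw [map_mul, mul_inv_rev, Equiv.Perm.mul_apply, h1]
      rw [hY, hc w hw]
      ring
    · intro w _ _
      simp only [ne_eq, mul_eq_right]
      exact hτ1
    · intro w hw; exact hmem w hw
    · intro w _; rw [← mul_assoc, hτ2, one_mul]
  rw [hval, key]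
  rfl

lemma blockIdx_lt_aux (lam : List ℕ) (x : ℕ) (hx : x < lam.sum) :
    blockIdx lam x < lam.length := by
  have hlen : 0 < lam.length := by
    rcases lam with _ | ⟨a, l⟩
    · simp at hx
    · simp
  unfold blockIdx
  have hsub : ((List.range lam.length).filter fun t =>
      decide ((lam.take (t + 1)).sum ≤ x)).Sublist (List.range lam.length) :=
    List.filter_sublist
  rcases lt_or_eq_of_le hsub.length_le with h | h
  · simpa using h
  · exfalso
    have heq := hsub.eq_of_length h
    have hm : lam.length - 1 ∈ List.range lam.length := by
      rw [List.mem_range]; omega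
    rw [← heq, List.mem_filter] at hm
    have := of_decide_eq_true hm.2
    have h1 : lam.length - 1 + 1 = lam.length := by omega
    rw [h1, List.take_length] at this
    omega

lemma swap_mem_young_aux (d : ℕ) (lam : List ℕ) {a b : Fin d}
    (h : blockIdx lam (a : ℕ) = blockIdx lam (b : ℕ)) :
    Equiv.swap a b ∈ youngSubgroup d lam := by
  intro j
  rcases eq_or_ne j a with rfl | hja
  · rw [Equiv.swap_apply_left]; exact h.symm
  rcases eq_or_ne j b with rfl | hjb
  · rw [Equiv.swap_apply_right]; exact h
  · rw [Equiv.swap_apply_of_ne_of_ne hja hjb]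

lemma exists_pair_aux (n : ℕ) (lam : List ℕ) (S : Finset (Fin n)) (hcard : lam.length < S.card)
    (hlt : ∀ j ∈ S, (j : ℕ) < lam.sum) :
    ∃ a ∈ S, ∃ b ∈ S, a ≠ b ∧ blockIdx lam (a : ℕ) = blockIdx lam (b : ℕ) := by
  have := Finset.exists_ne_map_eq_of_card_lt_of_maps_to (s := S)
    (t := Finset.range lam.length) (f := fun j => blockIdx lam (j : ℕ)) (by simpa using hcard)
    (fun j hj => Finset.mem_range.2 (blockIdx_lt_aux lam (j : ℕ) (hlt j hj)))
  obtain ⟨a, ha, b, hb, hab, he⟩ := this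
  exact ⟨a, ha, b, hb, hab, he⟩

lemma swap_ne_one_aux {d : ℕ} {a b : Fin d} (hab : a ≠ b) : Equiv.swap a b ≠ 1 := by
  intro e
  apply hab
  have := congrArg (fun σ : Equiv.Perm (Fin d) => σ a) e
  simpa [Equiv.swap_apply_left] using this.symm

lemma sign_swap_mul_aux {d : ℕ} (k : Type) [CommRing k] {a b : Fin d} (hab : a ≠ b)
    (w : Equiv.Perm (Fin d)) :
    ((Equiv.Perm.sign (Equiv.swap a b * w) : ℤ) : k) = -((Equiv.Perm.sign w : ℤ) : k) := by
  rw [map_mul, Equiv.Perm.sign_swap hab]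
  push_cast
  ring

lemma yElt_ann (k : Type) [CommRing k] (n r : ℕ) (h : r + 1 < n) (lam : List ℕ)
    (hp : IsPartitionList n lam) (hlen : lam.length < n - r) :
    PhiAlg k n r (yElt k n lam) = 0 := by
  classical
  rw [yElt, map_sum]
  simp only [PhiAlg, MonoidAlgebra.lift_single]
  refine core_cancel k n r (MonoidHom.id _) _ _ ?_
  intro x
  set S : Finset (Fin n) := (Finset.image x Finset.univ)ᶜ with hS
  have hcard : lam.length < S.card := by
    have h1 : (Finset.image x Finset.univ).card ≤ r :=
      le_trans Finset.card_image_le (by simp)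
    have h2 : S.card = Fintype.card (Fin n) - (Finset.image x Finset.univ).card :=
      Finset.card_compl _
    rw [Fintype.card_fin] at h2
    omega
  have hlt : ∀ j ∈ S, (j : ℕ) < lam.sum := by
    intro j _
    rw [hp.2.1]
    exact j.isLt
  obtain ⟨a, ha, b, hb, hab, hblock⟩ := exists_pair_aux n lam S hcard hlt
  have hanot : a ∉ Finset.image x Finset.univ := Finset.mem_compl.1 ha
  have hbnot : b ∉ Finset.image x Finset.univ := Finset.mem_compl.1 hb
  refine ⟨Equiv.swap a b, Equiv.swap_mul_self a b, swap_ne_one_aux hab, ?_, ?_, ?_⟩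
  · intro α
    exact Equiv.swap_apply_of_ne_of_ne
      (fun e => hanot (Finset.mem_image.2 ⟨α, Finset.mem_univ α, e⟩))
      (fun e => hbnot (Finset.mem_image.2 ⟨α, Finset.mem_univ α, e⟩))
  · intro w hw
    simp only [Finset.mem_filter, Finset.mem_univ, true_and] at hw ⊢
    exact Subgroup.mul_mem _ (swap_mem_young_aux n lam hblock) hw
  · intro w _
    exact sign_swap_mul_aux k hab w

lemma yEltSub_ann (k : Type) [CommRing k] (n r : ℕ) (hn : 0 < n) (h : r + 1 < n - 1)
    (lam : List ℕ) (hp : IsPartitionList (n - 1) lam) (hlen : lam.length < n - 1 - r) :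
    PhiSub k n r (stabLast n hn) (yEltSub k (stabLast n hn) lam) = 0 := by
  classical
  rw [yEltSub, map_sum]
  simp only [PhiSub, MonoidAlgebra.lift_single]
  refine core_cancel k n r ((stabLast n hn).subtype) _ _ ?_
  intro x
  set lastEl : Fin n := (⟨n - 1, Nat.sub_lt hn Nat.one_pos⟩ : Fin n) with hlast
  set S : Finset (Fin n) := (insert lastEl (Finset.image x Finset.univ))ᶜ with hS
  have hcard : lam.length < S.card := by
    have h1 : (insert lastEl (Finset.image x Finset.univ)).card ≤ r + 1 :=
      le_trans (Finset.card_insert_le _ _)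
        (Nat.add_le_add_right (le_trans Finset.card_image_le (by simp)) 1)
    have h2 : S.card = Fintype.card (Fin n) - (insert lastEl (Finset.image x Finset.univ)).card :=
      Finset.card_compl _
    rw [Fintype.card_fin] at h2
    omega
  have hlt : ∀ j ∈ S, (j : ℕ) < lam.sum := by
    intro j hj
    rw [hp.2.1]
    have hnot := Finset.mem_compl.1 hj
    have hne : j ≠ lastEl := fun e => hnot (Finset.mem_insert.2 (Or.inl e))
    have : (j : ℕ) ≠ n - 1 := fun e => hne (Fin.ext e)
    have := j.isLt
    omega
  obtain ⟨a, ha, b, hb, hab, hblock⟩ := exists_pair_aux n lam S hcard hlt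
  have hanot := Finset.mem_compl.1 ha
  have hbnot := Finset.mem_compl.1 hb
  have hane : a ≠ lastEl := fun e => hanot (Finset.mem_insert.2 (Or.inl e))
  have hbne : b ≠ lastEl := fun e => hbnot (Finset.mem_insert.2 (Or.inl e))
  have hstab : Equiv.swap a b ∈ stabLast n hn := by
    rw [stabLast, MulAction.mem_stabilizer_iff]
    show Equiv.swap a b • lastEl = lastEl
    rw [Equiv.Perm.smul_def]
    exact Equiv.swap_apply_of_ne_of_ne (Ne.symm hane) (Ne.symm hbne)
  refine ⟨⟨Equiv.swap a b, hstab⟩, ?_, ?_, ?_, ?_, ?_⟩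
  · rw [Subtype.ext_iff]
    simp [Equiv.swap_mul_self]
  · intro e
    exact swap_ne_one_aux hab (congrArg Subtype.val e)
  · intro α
    exact Equiv.swap_apply_of_ne_of_ne
      (fun e => hanot (Finset.mem_insert.2 (Or.inr (Finset.mem_image.2 ⟨α, Finset.mem_univ α, e⟩))))
      (fun e => hbnot (Finset.mem_insert.2 (Or.inr (Finset.mem_image.2 ⟨α, Finset.mem_univ α, e⟩))))
  · intro w hw
    simp only [Finset.mem_filter, Finset.mem_univ, true_and, Subgroup.coe_mul] at hw ⊢
    exact Subgroup.mul_mem _ (swap_mem_young_aux n lam hblock) hw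
  · intro w _
    show ((Equiv.Perm.sign ((⟨Equiv.swap a b, hstab⟩ * w : (stabLast n hn)) :
      Equiv.Perm (Fin n)) : ℤ) : k) = _
    rw [Subgroup.coe_mul]
    exact sign_swap_mul_aux k hab _

/-- Let `ε ∈ {0, 1/2}`, `d = n - 2ε`, and `d > r + 1`. If `λ ⊢ d` has strictly fewer
than `d - r` parts, then `y_λ ∈ ker Φ_{n,r+ε}`; consequently the two-sided ideal
generated by all such `y_λ` is contained in `ker Φ_{n,r+ε}`. -/
theorem stmt_14 (k : Type) [CommRing k] (n r : ℕ) :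
    (∀ _h : r + 1 < n,
      (∀ lam : List ℕ, IsPartitionList n lam → lam.length < n - r →
        PhiAlg k n r (yElt k n lam) = 0) ∧
      (∀ a : MonoidAlgebra k (Equiv.Perm (Fin n)),
        a ∈ TwoSidedIdeal.span {y : MonoidAlgebra k (Equiv.Perm (Fin n)) |
          ∃ lam : List ℕ, IsPartitionList n lam ∧ lam.length < n - r ∧ y = yElt k n lam} →
        PhiAlg k n r a = 0)) ∧
    (∀ (hn : 0 < n), r + 1 < n - 1 →
      (∀ lam : List ℕ, IsPartitionList (n - 1) lam → lam.length < n - 1 - r →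
        PhiSub k n r (stabLast n hn) (yEltSub k (stabLast n hn) lam) = 0) ∧
      (∀ a : MonoidAlgebra k ↥(stabLast n hn),
        a ∈ TwoSidedIdeal.span {y : MonoidAlgebra k ↥(stabLast n hn) |
          ∃ lam : List ℕ, IsPartitionList (n - 1) lam ∧ lam.length < n - 1 - r ∧
            y = yEltSub k (stabLast n hn) lam} →
        PhiSub k n r (stabLast n hn) a = 0))  := by
  constructor
  · intro h
    refine ⟨fun lam hp hlen => yElt_ann k n r h lam hp hlen, ?_⟩
    intro a ha
    have hmem := TwoSidedIdeal.mem_span_iff.1 ha (TwoSidedIdeal.ker (PhiAlg k n r)) ?_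
    · exact (TwoSidedIdeal.mem_ker _).1 hmem
    · rintro y ⟨lam, hp, hlen, rfl⟩
      exact (TwoSidedIdeal.mem_ker _).2 (yElt_ann k n r h lam hp hlen)
  · intro hn h
    refine ⟨fun lam hp hlen => yEltSub_ann k n r hn h lam hp hlen, ?_⟩
    intro a ha
    have hmem := TwoSidedIdeal.mem_span_iff.1 ha
      (TwoSidedIdeal.ker (PhiSub k n r (stabLast n hn))) ?_
    · exact (TwoSidedIdeal.mem_ker _).1 hmem
    · rintro y ⟨lam, hp, hlen, rfl⟩
      exact (TwoSidedIdeal.mem_ker _).2 (yEltSub_ann k n r hn h lam hp hlen)
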